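/- Let m > 0, J > 0. Let q₃, v₁, v₂, v₃, μ², μ³, η², η³, u₁, u₂ : ℝ → ℝ be differentiable functions such that v₃ = q̇₃, the knife-edge constraint sin q₃ · v₁ = cos q₃ · v₂ holds, and the affine-connection necessary conditions hold: u₁ = m η², u₂ = J η³, μ̇² = 0, μ̇³ = 0, η̇² = −μ², η̇³ = −μ³. Define μ̄¹ = μ² cos q₃, μ̄² = μ² sin q₃, μ̄³ = μ³, η̄¹ = η² cos q₃, η̄² = η² sin q₃, η̄³ = η³. Then the classical necessary conditions hold for all t: u₁ = m(η̄¹ cos q₃ + η̄² sin q₃), u₂ = J η̄³, and the barred multipliers satisfy η̄̇¹ = −μ̄¹ − η̄² v₃, η̄̇² = −μ̄² + η̄¹ v₃, η̄̇³ = −μ̄³ + η̄¹ v₂ − η̄² v₁, together with μ̄̇³ = (1/2) sin(2q₃) ((η̄¹)² − (η̄²)²) − η̄¹ η̄² cos(2q₃). [Note: the equations μ̄̇¹ = −μ² sin q₃ · q̇₃ and μ̄̇² = μ² cos q₃ · q̇₃ follow directly from the definitions and μ̇² = 0.] -/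
import Mathlib

open Real

/-- Verification that the affine-connection necessary conditions (24), (26), (27)
imply, under the substitution `μ̄¹ = μ² cos q₃`, `μ̄² = μ² sin q₃`, `μ̄³ = μ³`,
`η̄¹ = η² cos q₃`, `η̄² = η² sin q₃`, `η̄³ = η³`, the classical coordinate necessary
conditions (28) for the vertical coin. -/
theorem coin_classical_verification
    (m J : ℝ) (hm : 0 < m) (hJ : 0 < J)
    (q₃ v₁ v₂ v₃ μ₂ μ₃ η₂ η₃ u₁ u₂ : ℝ → ℝ)
    (hq₃ : Differentiable ℝ q₃)
    (hμ₂ : Differentiable ℝ μ₂) (hμ₃ : Differentiable ℝ μ₃)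
    (hη₂ : Differentiable ℝ η₂) (hη₃ : Differentiable ℝ η₃)
    (hv₃ : ∀ t : ℝ, v₃ t = deriv q₃ t)
    (hcon : ∀ t : ℝ, Real.sin (q₃ t) * v₁ t = Real.cos (q₃ t) * v₂ t)
    (hu₁ : ∀ t : ℝ, u₁ t = m * η₂ t)
    (hu₂ : ∀ t : ℝ, u₂ t = J * η₃ t)
    (hμ₂' : ∀ t : ℝ, deriv μ₂ t = 0)
    (hμ₃' : ∀ t : ℝ, deriv μ₃ t = 0)
    (hη₂' : ∀ t : ℝ, deriv η₂ t = -(μ₂ t))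
    (hη₃' : ∀ t : ℝ, deriv η₃ t = -(μ₃ t))
    (μb₁ μb₂ μb₃ ηb₁ ηb₂ ηb₃ : ℝ → ℝ)
    (hμb₁ : ∀ t : ℝ, μb₁ t = μ₂ t * Real.cos (q₃ t))
    (hμb₂ : ∀ t : ℝ, μb₂ t = μ₂ t * Real.sin (q₃ t))
    (hμb₃ : ∀ t : ℝ, μb₃ t = μ₃ t)
    (hηb₁ : ∀ t : ℝ, ηb₁ t = η₂ t * Real.cos (q₃ t))
    (hηb₂ : ∀ t : ℝ, ηb₂ t = η₂ t * Real.sin (q₃ t))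
    (hηb₃ : ∀ t : ℝ, ηb₃ t = η₃ t) :
    ∀ t : ℝ,
      u₁ t = m * (ηb₁ t * Real.cos (q₃ t) + ηb₂ t * Real.sin (q₃ t))
      ∧ u₂ t = J * ηb₃ t
      ∧ deriv ηb₁ t = -(μb₁ t) - ηb₂ t * v₃ t
      ∧ deriv ηb₂ t = -(μb₂ t) + ηb₁ t * v₃ t
      ∧ deriv ηb₃ t = -(μb₃ t) + ηb₁ t * v₂ t - ηb₂ t * v₁ t
      ∧ deriv μb₃ t = (1 / 2) * Real.sin (2 * q₃ t) * ((ηb₁ t) ^ 2 - (ηb₂ t) ^ 2)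
          - ηb₁ t * ηb₂ t * Real.cos (2 * q₃ t) := by
  have e1 : ηb₁ = fun t => η₂ t * Real.cos (q₃ t) := funext hηb₁
  have e2 : ηb₂ = fun t => η₂ t * Real.sin (q₃ t) := funext hηb₂
  have e3 : ηb₃ = η₃ := funext hηb₃
  have e4 : μb₃ = μ₃ := funext hμb₃
  intro t
  have hcosd : ∀ s, HasDerivAt (fun x => Real.cos (q₃ x))
      (-Real.sin (q₃ s) * deriv q₃ s) s := fun s =>
    (Real.hasDerivAt_cos (q₃ s)).comp s (hq₃ s).hasDerivAt
  have hsind : ∀ s, HasDerivAt (fun x => Real.sin (q₃ x))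
      (Real.cos (q₃ s) * deriv q₃ s) s := fun s =>
    (Real.hasDerivAt_sin (q₃ s)).comp s (hq₃ s).hasDerivAt
  have d1 : deriv ηb₁ t
      = deriv η₂ t * Real.cos (q₃ t) + η₂ t * (-Real.sin (q₃ t) * deriv q₃ t) := by
    rw [e1]
    exact (((hη₂ t).hasDerivAt.mul (hcosd t))).deriv
  have d2 : deriv ηb₂ t
      = deriv η₂ t * Real.sin (q₃ t) + η₂ t * (Real.cos (q₃ t) * deriv q₃ t) := by
    rw [e2]
    exact (((hη₂ t).hasDerivAt.mul (hsind t))).deriv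
  refine ⟨?_, ?_, ?_, ?_, ?_, ?_⟩
  · rw [hu₁, hηb₁, hηb₂]
    linear_combination (-(m * η₂ t)) * Real.sin_sq_add_cos_sq (q₃ t)
  · rw [hu₂, hηb₃]
  · rw [d1, hη₂' t, hμb₁, hηb₂, hv₃]; ring
  · rw [d2, hη₂' t, hμb₂, hηb₁, hv₃]; ring
  · rw [e3, hη₃' t, hμb₃, hηb₁, hηb₂]
    linear_combination (η₂ t) * hcon t
  · rw [e4, hμ₃' t, hηb₁, hηb₂, Real.sin_two_mul, Real.cos_two_mul']
    ring
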